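/- Let k ≤ m be fixed integers with m > 0, and let f_n(t,u_{n+k},…,u_{n+m}), τ_n(t,u_n), φ_n(t,u_n) (n ∈ ℤ) be continuously differentiable real functions satisfying the determining equation for Lie point symmetries of the generalized Volterra-type equation identically. If ∂f_n/∂u_{n+m} is nowhere zero for every n ∈ ℤ, then τ_n(t,u_n) is independent of u_n, i.e. τ_n(t,u_n) = τ_n(t), and moreover τ_{n+m}(t) = τ_n(t) for all n ∈ ℤ and t ∈ ℝ (τ_n is m-periodic in n). -/

import Mathlib

/-- The index type `{k, k+1, …, m}` of the arguments `u_{n+k}, …, u_{n+m}` of `fₙ`. -/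
abbrev ShiftIdx (k m : ℤ) : Type := {l : ℤ // l ∈ Finset.Icc k m}

/-- The tuple `(u_{j+k}, …, u_{j+m})` read off from a configuration `U : ℤ → ℝ`. -/
def shiftArg (k m : ℤ) (U : ℤ → ℝ) (j : ℤ) : ShiftIdx k m → ℝ := fun i => U (j + i.1)

/-- The partial derivative `∂f_j/∂u_{j+l}` evaluated at `(t, u_{j+k}, …, u_{j+m})`,
where the `u`'s are read off from the configuration `U : ℤ → ℝ`. -/
noncomputable def pdF (k m : ℤ) (f : ℤ → ℝ → (ShiftIdx k m → ℝ) → ℝ) (t : ℝ) (U : ℤ → ℝ)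
    (j : ℤ) (l : ShiftIdx k m) : ℝ :=
  deriv (fun z => f j t (Function.update (shiftArg k m U j) l z)) (U (j + l.1))

/-- The determining equation for Lie point symmetries of the generalized Volterra-type
equation `u̇ₙ = fₙ(t, u_{n+k}, …, u_{n+m})`, with point-symmetry characteristic
`Qₙ = φₙ(t,uₙ) − τₙ(t,uₙ) u̇ₙ`, required to hold identically in `t` and in all the
jet variables (encoded by an arbitrary configuration `U : ℤ → ℝ`). -/
def GenVolterraDetEq (k m : ℤ) (f : ℤ → ℝ → (ShiftIdx k m → ℝ) → ℝ)
    (τ φ : ℤ → ℝ → ℝ → ℝ) : Prop :=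
  ∀ (n : ℤ) (t : ℝ) (U : ℤ → ℝ),
    (∑ l : ShiftIdx k m, pdF k m f t U n l *
        (φ (n + l.1) t (U (n + l.1)) -
          τ (n + l.1) t (U (n + l.1)) * f (n + l.1) t (shiftArg k m U (n + l.1)))) +
      (deriv (fun s => τ n s (U n)) t +
          deriv (fun z => τ n t z) (U n) * f n t (shiftArg k m U n)) *
        f n t (shiftArg k m U n) +
      τ n t (U n) *
        (deriv (fun s => f n s (shiftArg k m U n)) t +
          ∑ l : ShiftIdx k m, pdF k m f t U n l * f (n + l.1) t (shiftArg k m U (n + l.1))) -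
      deriv (fun s => φ n s (U n)) t -
      deriv (fun z => φ n t z) (U n) * f n t (shiftArg k m U n) = 0

/-- Theorem 3.2, first case: for `u̇ₙ = fₙ(t,u_{n+k},…,u_{n+m})` with `m > 0` and
`∂fₙ/∂u_{n+m}` nowhere zero for all `n`, the symmetry coefficient `τₙ(t,uₙ)` is
independent of `uₙ` and is `m`-periodic in `n`. -/
theorem genVolterra_tau_m_periodic (k m : ℤ) (hkm : k ≤ m) (hm : 0 < m)
    (f : ℤ → ℝ → (ShiftIdx k m → ℝ) → ℝ) (τ φ : ℤ → ℝ → ℝ → ℝ)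
    (hf : ∀ n, ContDiff ℝ 1 (fun p : ℝ × (ShiftIdx k m → ℝ) => f n p.1 p.2))
    (hτ : ∀ n, ContDiff ℝ 1 (fun p : ℝ × ℝ => τ n p.1 p.2))
    (hφ : ∀ n, ContDiff ℝ 1 (fun p : ℝ × ℝ => φ n p.1 p.2))
    (hdet : GenVolterraDetEq k m f τ φ)
    (hnd : ∀ (n : ℤ) (t : ℝ) (v : ShiftIdx k m → ℝ),
      deriv (fun z => f n t (Function.update v ⟨m, Finset.mem_Icc.mpr ⟨hkm, le_rfl⟩⟩ z))
        (v ⟨m, Finset.mem_Icc.mpr ⟨hkm, le_rfl⟩⟩) ≠ 0) :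
    (∀ (n : ℤ) (t u u' : ℝ), τ n t u = τ n t u') ∧
      (∀ (n : ℤ) (t u : ℝ), τ (n + m) t u = τ n t u) := by
  classical
  set M : ShiftIdx k m := ⟨m, Finset.mem_Icc.mpr ⟨hkm, le_rfl⟩⟩ with hM
  have hMm : (M.1 : ℤ) = m := rfl
  have key : ∀ (n : ℤ) (t : ℝ) (U : ℤ → ℝ),
      τ (n + m) t (U (n + m)) = τ n t (U n) := by
    intro n t U
    have hle : ∀ l : ShiftIdx k m, l.1 ≤ m := fun l => (Finset.mem_Icc.mp l.2).2
    have hne : ∀ l : ShiftIdx k m, l ≠ M → l.1 ≠ m := by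
      intro l h hc
      exact h (Subtype.ext (by rw [hc, hMm]))
    set v : ShiftIdx k m → ℝ := shiftArg k m U (n + m) with hv
    set F : ℝ → ℝ := fun z => f (n + m) t (Function.update v M z) with hF
    set U' : ℝ → ℤ → ℝ := fun z => Function.update U (n + m + m) z with hU'
    have hUn : ∀ z, U' z n = U n := fun z => Function.update_of_ne (by omega) _ _
    have hUl : ∀ z (l : ShiftIdx k m), U' z (n + l.1) = U (n + l.1) := fun z l =>
      Function.update_of_ne (by have := hle l; omega) _ _
    have hSn : ∀ z, shiftArg k m (U' z) n = shiftArg k m U n := by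
      intro z; funext i
      exact Function.update_of_ne (by have := hle i; omega) _ _
    have hSl : ∀ z (l : ShiftIdx k m), l ≠ M →
        shiftArg k m (U' z) (n + l.1) = shiftArg k m U (n + l.1) := by
      intro z l hl; funext i
      exact Function.update_of_ne
        (by have h1 := hle l; have h2 := hle i; have h3 := hne l hl; omega) _ _
    have hSM : ∀ z, shiftArg k m (U' z) (n + M.1) = Function.update v M z := by
      intro z; funext i
      by_cases h : i = M
      · subst h
        show U' z (n + M.1 + M.1) = Function.update v M z M
        rw [Function.update_self]
        show Function.update U (n + m + m) z (n + M.1 + M.1) = z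
        have he : n + M.1 + M.1 = n + m + m := by rw [hMm]
        rw [he, Function.update_self]
      · show U' z (n + M.1 + i.1) = Function.update v M z i
        rw [Function.update_of_ne h]
        show Function.update U (n + m + m) z (n + M.1 + i.1) = v i
        rw [Function.update_of_ne
          (by have h1 := hle i; have h2 := hne i h; have h3 := hMm; omega)]
        rfl
    have hpd : ∀ z (l : ShiftIdx k m), pdF k m f t (U' z) n l = pdF k m f t U n l := by
      intro z l
      unfold pdF
      rw [hSn z, hUl z l]
    have hdiffF : ∀ z, DifferentiableAt ℝ F z := by
      intro z
      have h1 : Differentiable ℝ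
          fun z : ℝ => ((t, Function.update v M z) : ℝ × (ShiftIdx k m → ℝ)) := by
        refine (differentiable_const t).prodMk ?_
        refine differentiable_pi.mpr fun i => ?_
        simp only [Function.update_apply]
        by_cases h : i = M
        · simp [h]
        · simp [h]
      have h2 := ((hf (n + m)).differentiable one_ne_zero).comp h1
      exact h2 z
    have hF' : ∀ z, deriv F z ≠ 0 := by
      intro z
      have h := hnd (n + m) t (Function.update v M z)
      have e1 : (fun w => f (n + m) t (Function.update (Function.update v M z) M w)) = F := by
        funext w; rw [Function.update_idem]
      rw [e1, Function.update_self] at h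
      exact h
    have hP : pdF k m f t U n M ≠ 0 := by
      have h := hnd n t (shiftArg k m U n)
      unfold pdF
      exact h
    have hsplit1 : ∀ z,
        (∑ l : ShiftIdx k m, pdF k m f t U n l *
            (φ (n + l.1) t (U (n + l.1)) -
              τ (n + l.1) t (U (n + l.1)) * f (n + l.1) t (shiftArg k m (U' z) (n + l.1))))
          = pdF k m f t U n M *
              (φ (n + m) t (U (n + m)) - τ (n + m) t (U (n + m)) * F z) +
            ∑ l ∈ ({M}ᶜ : Finset (ShiftIdx k m)), pdF k m f t U n l *
              (φ (n + l.1) t (U (n + l.1)) -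
                τ (n + l.1) t (U (n + l.1)) * f (n + l.1) t (shiftArg k m U (n + l.1))) := by
      intro z
      rw [Fintype.sum_eq_add_sum_compl M]
      refine congrArg₂ (· + ·) ?_ (Finset.sum_congr rfl fun l hl => by
        rw [hSl z l (by simpa using hl)])
      rw [hSM z]
    have hsplit2 : ∀ z,
        (∑ l : ShiftIdx k m, pdF k m f t U n l *
            f (n + l.1) t (shiftArg k m (U' z) (n + l.1)))
          = pdF k m f t U n M * F z +
            ∑ l ∈ ({M}ᶜ : Finset (ShiftIdx k m)), pdF k m f t U n l *
              f (n + l.1) t (shiftArg k m U (n + l.1)) := by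
      intro z
      rw [Fintype.sum_eq_add_sum_compl M]
      refine congrArg₂ (· + ·) ?_ (Finset.sum_congr rfl fun l hl => by
        rw [hSl z l (by simpa using hl)])
      rw [hSM z]
    have hkey : ∀ z w : ℝ,
        (τ n t (U n) - τ (n + m) t (U (n + m))) * pdF k m f t U n M * (F z - F w) = 0 := by
      intro z w
      have hz := hdet n t (U' z)
      have hw := hdet n t (U' w)
      simp only [hUn, hUl, hSn, hpd] at hz hw
      rw [hsplit1 z, hsplit2 z] at hz
      rw [hsplit1 w, hsplit2 w] at hw
      linear_combination hz - hw
    set c : ℝ := (τ n t (U n) - τ (n + m) t (U (n + m))) * pdF k m f t U n M with hc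
    have hconst : (fun z => c * F z) = fun _ => c * F 0 := by
      funext z
      linear_combination hkey z 0
    have hd : deriv (fun z => c * F z) 1 = 0 := by rw [hconst]; simp
    rw [deriv_const_mul c (hdiffF 1)] at hd
    have hc0 : c = 0 := by
      rcases mul_eq_zero.mp hd with h | h
      · exact h
      · exact absurd h (hF' 1)
    rw [hc] at hc0
    rcases mul_eq_zero.mp hc0 with h | h
    · exact (sub_eq_zero.mp h).symm
    · exact absurd h hP
  constructor
  · intro n t u u'
    have hne : n + m ≠ n := by omega
    have h1 := key n t (fun j => if j = n then u else 0)
    have h2 := key n t (fun j => if j = n then u' else 0)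
    simp only [hne, if_true, if_false, eq_self_iff_true, if_neg hne, if_pos rfl] at h1 h2
    exact h1.symm.trans h2
  · intro n t u
    exact key n t (fun _ => u)
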